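/- Let n, m ≥ 1 and let X be a real n×m matrix. Then σ(Ω + 2I) + null(Ω + 2I) equals the number of eigenvalues of Ω, counted with multiplicity, lying in the closed interval [−2, 2]. -/

import Mathlib

open Matrix Polynomial

section Aux

variable {N : Type*} [Fintype N] [DecidableEq N]

/-- Characteristic polynomial is invariant under conjugation. -/
lemma aux_charpoly_conj (U M V : Matrix N N ℝ) (hUV : U * V = 1) :
    (U * M * V).charpoly = M.charpoly := by
  set mapC : Matrix N N ℝ →+* Matrix N N ℝ[X] := (C : ℝ →+* ℝ[X]).mapMatrix with hmapC
  have hmap : ∀ (P Q : Matrix N N ℝ), mapC (P * Q) = mapC P * mapC Q := fun P Q =>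
    _root_.map_mul _ P Q
  have hone : mapC (1 : Matrix N N ℝ) = 1 := _root_.map_one _
  have hcomm : ∀ (W : Matrix N N ℝ[X]), W * Matrix.scalar N (X : ℝ[X])
      = Matrix.scalar N (X : ℝ[X]) * W := fun W => by
    ext i j
    simp [Matrix.scalar_apply, Matrix.mul_diagonal, Matrix.diagonal_mul, mul_comm]
  have key : charmatrix (U * M * V) = mapC U * charmatrix M * mapC V := by
    simp only [charmatrix, Matrix.mul_sub, Matrix.sub_mul, ← hmapC, hmap]
    congr 1
    rw [hcomm, mul_assoc, ← hmap, hUV, hone, mul_one]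
  rw [Matrix.charpoly, Matrix.charpoly, key, Matrix.det_mul, Matrix.det_mul,
    mul_comm ((mapC U).det), mul_assoc, ← Matrix.det_mul, ← hmap, hUV, hone]
  simp

lemma aux_charpoly_diagonal (d : N → ℝ) :
    (Matrix.diagonal d).charpoly = ∏ i, (X - C (d i)) := by
  have : charmatrix (Matrix.diagonal d) = Matrix.diagonal fun i => X - C (d i) := by
    ext i j
    by_cases h : i = j
    · subst h; simp
    · simp [h, Matrix.diagonal_apply_ne _ h]
  rw [Matrix.charpoly, this, Matrix.det_diagonal]

/-- The charpoly of a real hermitian matrix is the product over eigenvalues. -/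
lemma aux_charpoly_hermitian (M : Matrix N N ℝ) (hM : M.IsHermitian) :
    M.charpoly = ∏ i, (X - C (hM.eigenvalues i)) := by
  have hU : (hM.eigenvectorUnitary : Matrix N N ℝ) * (star hM.eigenvectorUnitary : Matrix N N ℝ)
      = 1 := by
    simpa using (Matrix.mem_unitaryGroup_iff'.mp hM.eigenvectorUnitary.2).symm ▸
      (Matrix.mem_unitaryGroup_iff.mp hM.eigenvectorUnitary.2)
  calc M.charpoly
      = ((hM.eigenvectorUnitary : Matrix N N ℝ) * Matrix.diagonal (RCLike.ofReal ∘ hM.eigenvalues)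
          * (star hM.eigenvectorUnitary : Matrix N N ℝ)).charpoly := by
        exact congrArg Matrix.charpoly hM.spectral_theorem
    _ = (Matrix.diagonal (RCLike.ofReal ∘ hM.eigenvalues)).charpoly := by
        rw [aux_charpoly_conj _ _ _ hU]
    _ = ∏ i, (X - C (hM.eigenvalues i)) := by
        rw [aux_charpoly_diagonal]; rfl

lemma aux_roots_charpoly (M : Matrix N N ℝ) (hM : M.IsHermitian) :
    M.charpoly.roots = Finset.univ.val.map hM.eigenvalues := by
  rw [aux_charpoly_hermitian M hM]
  have := Polynomial.roots_multiset_prod_X_sub_C (Finset.univ.val.map hM.eigenvalues)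
  rw [← this]
  congr 1
  rw [Multiset.map_map, Finset.prod_eq_multiset_prod]
  rfl

lemma aux_split (t : Multiset ℝ) :
    Multiset.countP (fun a : ℝ => -2 < a) t
      = Multiset.countP (fun a : ℝ => -2 < a ∧ a ≤ 2) t
        + Multiset.countP (fun a : ℝ => 2 < a) t := by
  induction t using Multiset.induction with
  | empty => simp
  | cons a t ih =>
    rw [Multiset.countP_cons, Multiset.countP_cons, Multiset.countP_cons, ih]
    by_cases h1 : (-2 : ℝ) < a
    · by_cases h2 : a ≤ 2
      · rw [if_pos h1, if_pos ⟨h1, h2⟩, if_neg (not_lt.mpr h2)]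
        omega
      · rw [if_pos h1, if_neg (fun h => h2 h.2), if_pos (lt_of_not_ge h2)]
        omega
    · rw [if_neg h1, if_neg (fun h => h1 h.1), if_neg (fun h : (2:ℝ) < a => h1 (by linarith))]
      omega

lemma aux_Icc (t : Multiset ℝ) :
    Multiset.countP (fun a : ℝ => a ∈ Set.Icc (-2 : ℝ) 2) t
      = Multiset.countP (fun a : ℝ => -2 < a ∧ a ≤ 2) t
        + Multiset.countP (fun a : ℝ => a = -2) t := by
  induction t using Multiset.induction with
  | empty => simp
  | cons a t ih =>
    rw [Multiset.countP_cons, Multiset.countP_cons, Multiset.countP_cons, ih]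
    by_cases h1 : a = -2
    · subst h1
      rw [if_pos (Set.mem_Icc.mpr ⟨le_refl _, by norm_num⟩),
        if_neg (fun h : (-2:ℝ) < -2 ∧ (-2:ℝ) ≤ 2 => lt_irrefl _ h.1), if_pos rfl]
      omega
    · by_cases h2 : (-2 : ℝ) < a ∧ a ≤ 2
      · rw [if_pos (Set.mem_Icc.mpr ⟨le_of_lt h2.1, h2.2⟩), if_pos h2, if_neg h1]
        omega
      · rw [if_neg (fun h => h2 ⟨lt_of_le_of_ne (Set.mem_Icc.mp h).1 (Ne.symm h1),
          (Set.mem_Icc.mp h).2⟩), if_neg h2, if_neg h1]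
        omega

end Aux

/-- For a real `n × m` matrix `X` and `Ω = [[0, X], [Xᵀ, 0]]`, the signature plus the
nullity of `Ω + 2I` equals the number of eigenvalues of `Ω` (with multiplicity) in `[-2, 2]`. -/
theorem signature_plus_nullity_eq_card_eigenvalues_in_Icc
    (n m : ℕ) (hn : 1 ≤ n) (hm : 1 ≤ m)
    (X : Matrix (Fin n) (Fin m) ℝ)
    (Ω : Matrix (Fin n ⊕ Fin m) (Fin n ⊕ Fin m) ℝ)
    (hΩdef : Ω = Matrix.fromBlocks 0 X Xᵀ 0)
    (hΩ : Ω.IsHermitian)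
    (hA : (Ω + (2 : ℝ) • 1).IsHermitian) :
    ((Finset.univ.filter fun i => 0 < hA.eigenvalues i).card : ℤ)
        - ((Finset.univ.filter fun i => hA.eigenvalues i < 0).card : ℤ)
        + (Module.finrank ℝ ↥(LinearMap.ker (Ω + (2 : ℝ) • 1).mulVecLin) : ℤ)
      = ((Finset.univ.filter fun i => hΩ.eigenvalues i ∈ Set.Icc (-2 : ℝ) 2).card : ℤ) := by
  classical
  set A := Ω + (2 : ℝ) • 1 with hAdef
  set s : Multiset ℝ := Finset.univ.val.map hΩ.eigenvalues with hs
  set U : Matrix (Fin n ⊕ Fin m) (Fin n ⊕ Fin m) ℝ := (hΩ.eigenvectorUnitary : Matrix (Fin n ⊕ Fin m) (Fin n ⊕ Fin m) ℝ) with hUdef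
  have hU : U * star U = 1 := Matrix.mem_unitaryGroup_iff.mp hΩ.eigenvectorUnitary.2
  have hAconj : A = U * Matrix.diagonal (fun i => hΩ.eigenvalues i + 2) * star U := by
    have hdiag : Matrix.diagonal (fun i : Fin n ⊕ Fin m => hΩ.eigenvalues i + 2)
        = Matrix.diagonal (RCLike.ofReal ∘ hΩ.eigenvalues) + (2 : ℝ) • 1 := by
      ext i j
      by_cases h : i = j
      · subst h; simp [Matrix.one_apply, RCLike.ofReal]
      · simp [Matrix.diagonal_apply_ne _ h, Matrix.one_apply_ne h]
    have hsp : Ω = U * Matrix.diagonal (RCLike.ofReal ∘ hΩ.eigenvalues) * star U :=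
      hΩ.spectral_theorem
    rw [hdiag, Matrix.mul_add, Matrix.add_mul, ← hsp, hAdef]
    congr 1
    rw [Matrix.mul_smul, Matrix.mul_one, Matrix.smul_mul, hU]
  -- eigenvalue multiset of A is s.map (· + 2)
  have hAroots : Finset.univ.val.map hA.eigenvalues = s.map (fun x => x + 2) := by
    have h1 := aux_roots_charpoly A hA
    have h2 : A.charpoly
        = (Matrix.diagonal (fun i : Fin n ⊕ Fin m => hΩ.eigenvalues i + 2)).charpoly := by
      rw [hAconj, aux_charpoly_conj _ _ _ hU]
    rw [h2, aux_charpoly_diagonal] at h1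
    have h3 := Polynomial.roots_multiset_prod_X_sub_C (s.map (fun x => x + 2))
    rw [← h1, ← h3, hs, Multiset.map_map, Finset.prod_eq_multiset_prod, Multiset.map_map]
    rfl
  -- symmetry of s
  have hsym : s.map (fun x => -x) = s := by
    set D : Matrix (Fin n ⊕ Fin m) (Fin n ⊕ Fin m) ℝ := Matrix.fromBlocks 1 0 0 (-1) with hD
    have hDD : D * D = 1 := by
      rw [hD, Matrix.fromBlocks_multiply]
      simp [Matrix.fromBlocks_one]
    have hDΩD : D * Ω * D = -Ω := by
      rw [hD, hΩdef, Matrix.fromBlocks_multiply, Matrix.fromBlocks_multiply]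
      simp [Matrix.fromBlocks_neg]
    have h1 : (-Ω).charpoly = Ω.charpoly := by
      rw [← hDΩD, aux_charpoly_conj _ _ _ hDD]
    have h2 : (-Ω).charpoly
        = (Matrix.diagonal (fun i : Fin n ⊕ Fin m => -(hΩ.eigenvalues i))).charpoly := by
      have hmΩ : -Ω = U * Matrix.diagonal (fun i : Fin n ⊕ Fin m => -(hΩ.eigenvalues i))
          * star U := by
        have hdn : Matrix.diagonal (fun i : Fin n ⊕ Fin m => -(hΩ.eigenvalues i))
            = -Matrix.diagonal (RCLike.ofReal ∘ hΩ.eigenvalues) := by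
          ext i j
          by_cases h : i = j
          · subst h; simp [RCLike.ofReal]
          · simp [Matrix.diagonal_apply_ne _ h]
        have hsp : Ω = U * Matrix.diagonal (RCLike.ofReal ∘ hΩ.eigenvalues) * star U :=
          hΩ.spectral_theorem
        rw [hdn, Matrix.mul_neg, Matrix.neg_mul, ← hsp]
      rw [hmΩ, aux_charpoly_conj _ _ _ hU]
    have h3 : Ω.charpoly.roots = s := aux_roots_charpoly Ω hΩ
    have h4 : (Matrix.diagonal (fun i : Fin n ⊕ Fin m => -(hΩ.eigenvalues i))).charpoly.roots
        = s.map (fun x => -x) := by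
      rw [aux_charpoly_diagonal]
      have h5 := Polynomial.roots_multiset_prod_X_sub_C (s.map (fun x => -x))
      rw [← h5, hs, Multiset.map_map, Finset.prod_eq_multiset_prod, Multiset.map_map]
      rfl
    rw [← h4, ← h2, h1, h3]
  -- translate Finset.filter cards to Multiset.countP
  have hcount : ∀ (f : Fin n ⊕ Fin m → ℝ) (p : ℝ → Prop) [DecidablePred p],
      (Finset.univ.filter fun i => p (f i)).card
        = Multiset.countP p (Finset.univ.val.map f) := by
    intro f p _
    rw [Multiset.countP_map]
    rfl
  -- nullity
  have hnull : Module.finrank ℝ ↥(LinearMap.ker A.mulVecLin)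
      = Multiset.countP (fun x => x = 0) (Finset.univ.val.map hA.eigenvalues) := by
    have hrn := LinearMap.finrank_range_add_finrank_ker A.mulVecLin
    have hrank : A.rank = (Finset.univ.filter fun i => hA.eigenvalues i ≠ 0).card := by
      rw [hA.rank_eq_card_non_zero_eigs, Fintype.card_subtype]
    have hArank : A.rank = Module.finrank ℝ ↥(LinearMap.range A.mulVecLin) := rfl
    have hdim : Module.finrank ℝ (Fin n ⊕ Fin m → ℝ) = Fintype.card (Fin n ⊕ Fin m) := Module.finrank_pi ℝ
    have hcard : (Finset.univ.filter fun i => hA.eigenvalues i ≠ 0).card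
          + (Finset.univ.filter fun i => hA.eigenvalues i = 0).card
          = Fintype.card (Fin n ⊕ Fin m) := by
      have h0 := Finset.card_filter_add_card_filter_not
        (s := (Finset.univ : Finset (Fin n ⊕ Fin m))) (p := fun i => hA.eigenvalues i ≠ 0)
      simp only [not_not] at h0
      rw [Finset.card_univ] at h0
      convert h0 using 3
    have := hcount hA.eigenvalues (fun x => x = 0)
    omega
  have mapcount : ∀ (p : ℝ → Prop) [DecidablePred p] (t : Multiset ℝ) (f : ℝ → ℝ),
      Multiset.countP p (t.map f) = Multiset.countP (fun x => p (f x)) t := by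
    intro p _ t f
    rw [Multiset.countP_map, Multiset.countP_eq_card_filter]
  rw [hcount hA.eigenvalues (fun x => 0 < x), hcount hA.eigenvalues (fun x => x < 0), hnull,
    hcount hΩ.eigenvalues (fun x => x ∈ Set.Icc (-2 : ℝ) 2), ← hs]
  rw [hAroots]
  simp only [mapcount]
  -- now everything is a countP over s
  have c1 : Multiset.countP (fun a => 0 < a + 2) s = Multiset.countP (fun a => -2 < a) s := by
    apply Multiset.countP_congr rfl
    intro x _; rw [eq_iff_iff]; constructor <;> intro h <;> linarith
  have c2 : Multiset.countP (fun a => a + 2 < 0) s = Multiset.countP (fun a => a < -2) s := by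
    apply Multiset.countP_congr rfl
    intro x _; rw [eq_iff_iff]; constructor <;> intro h <;> linarith
  have c3 : Multiset.countP (fun a => a + 2 = 0) s = Multiset.countP (fun a => a = -2) s := by
    apply Multiset.countP_congr rfl
    intro x _; rw [eq_iff_iff]; constructor <;> intro h <;> linarith
  rw [c1, c2, c3]
  -- symmetry: countP (2 < ·) = countP (· < -2)
  have csym : Multiset.countP (fun a => 2 < a) s = Multiset.countP (fun a => a < -2) s := by
    conv_lhs => rw [← hsym]
    simp only [mapcount]
    apply Multiset.countP_congr rfl
    intro x _; rw [eq_iff_iff]; constructor <;> intro h <;> linarith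
  rw [aux_split s, aux_Icc s, ← csym]
  push_cast
  ring
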